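/- For the SAIS system without awareness decay and κ + β ≠ βₐ, the function a(s) = C₀(δ - (κ+β)s)^{βₐ/(κ+β)} + κ(δ - βₐ s)/(βₐ(κ+β-βₐ)) satisfies the trajectory ODE da/ds = (κs - βₐ a)/(δ - (κ+β)s) at every s with δ - (κ+β)s > 0, for any constant C₀. -/

import Mathlib

/-- Explicit solution of the trajectory ODE da/ds = (κs - βₐa)/(δ - (κ+β)s)
for the SAIS system without awareness decay. -/
theorem stmt_3
    (β βa κ δ C₀ : ℝ)
    (hβ : 0 < β) (hβa : 0 < βa) (hκ : 0 < κ) (hδ : 0 < δ)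
    (hne : κ + β ≠ βa)
    (a : ℝ → ℝ)
    (ha : ∀ s, a s = C₀ * (δ - (κ + β) * s) ^ (βa / (κ + β))
        + κ * (δ - βa * s) / (βa * (κ + β - βa))) :
    ∀ s : ℝ, 0 < δ - (κ + β) * s →
      HasDerivAt a ((κ * s - βa * a s) / (δ - (κ + β) * s)) s := by
  intro s hs
  have hk : (0:ℝ) < κ + β := by linarith
  have hd : κ + β - βa ≠ 0 := sub_ne_zero.mpr hne
  set u := δ - (κ + β) * s with hu
  set p := βa / (κ + β) with hp
  have h1 : HasDerivAt (fun s : ℝ => δ - (κ + β) * s) (-(κ + β)) s := by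
    simpa using ((hasDerivAt_id s).const_mul (κ + β)).const_sub δ
  have h2 : HasDerivAt (fun s : ℝ => (δ - (κ + β) * s) ^ p)
      (-(κ + β) * p * u ^ (p - 1)) s :=
    h1.rpow_const (Or.inl hs.ne')
  have h3 := h2.const_mul C₀
  have h4 : HasDerivAt (fun s : ℝ => κ * (δ - βa * s) / (βa * (κ + β - βa)))
      (κ * (-βa) / (βa * (κ + β - βa))) s := by
    simpa using
      ((((hasDerivAt_id s).const_mul βa).const_sub δ).const_mul κ).div_const
        (βa * (κ + β - βa))
  have haf : a = fun s => C₀ * (δ - (κ + β) * s) ^ p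
      + κ * (δ - βa * s) / (βa * (κ + β - βa)) := funext ha
  rw [haf]
  convert h3.add h4 using 1
  case e'_4 => rfl
  case e'_5 => rfl
  case e'_8 => rfl
  beta_reduce
  rw [← hu]
  have hupow : u ^ (p - 1) = u ^ p / u := Real.rpow_sub_one hs.ne' p
  have hpk : p * (κ + β) = βa := div_mul_cancel₀ βa hk.ne'
  rw [hupow, hp]
  field_simp
  ring
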